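/- For every controlled Markov process and every finite horizon T ≥ 1, the set of marginal state distributions induced by non-Markovian policies equals the set induced by Markovian policies: {d_T^π : π non-Markovian} = {d_T^π : π Markovian}, where d_T^π(s) = (1/T) Σ_{t=0}^{T−1} d_t^π(s). -/

import Mathlib

open scoped BigOperators

/-- A controlled Markov process over finite state space `S` and action space `A`:
a transition kernel `P` and an initial distribution `μ`. -/
structure CMP (S A : Type) [Fintype S] [Fintype A] where
  P : S → A → S → ℝ
  P_nonneg : ∀ s a s', 0 ≤ P s a s'
  P_sum_one : ∀ s a, ∑ s', P s a s' = 1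
  μ : S → ℝ
  μ_nonneg : ∀ s, 0 ≤ μ s
  μ_sum_one : ∑ s, μ s = 1

/-- A history of `t` steps: states `s_0, …, s_t` and actions `a_0, …, a_{t-1}`. -/
abbrev Hist (S A : Type) (t : ℕ) : Type := (Fin (t + 1) → S) × (Fin t → A)

/-- A continuation of `k` further steps: actions `a_0, …, a_{k-1}` together with the
states those actions lead to. -/
abbrev Contin (S A : Type) (k : ℕ) : Type := (Fin k → A) × (Fin k → S)

/-- A general (possibly non-Markovian, possibly randomized) policy: for every time `t`
and history of length `t`, a probability distribution over actions. -/
structure Policy (S A : Type) [Fintype A] where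
  p : ∀ t : ℕ, Hist S A t → A → ℝ
  nonneg : ∀ t h a, 0 ≤ p t h a
  sum_one : ∀ t h, ∑ a, p t h a = 1

/-- A Markovian (randomized, time-dependent) policy: for every time `t` and current
state `s`, a probability distribution over actions. -/
structure MPolicy (S A : Type) [Fintype A] where
  p : ℕ → S → A → ℝ
  nonneg : ∀ t s a, 0 ≤ p t s a
  sum_one : ∀ t s, ∑ a, p t s a = 1

/-- The last (current) state of a history. -/
def lastState {S A : Type} {t : ℕ} (h : Hist S A t) : S := h.1 (Fin.last t)

/-- A Markovian policy viewed as a general policy. -/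
def MPolicy.toPolicy {S A : Type} [Fintype A] (m : MPolicy S A) : Policy S A where
  p := fun t h a => m.p t (lastState h) a
  nonneg := fun t h a => m.nonneg t _ a
  sum_one := fun t h => m.sum_one t _

/-- The general policy induced by a deterministic non-Markovian policy
(a function from histories to actions). -/
def detPolicy {S A : Type} [Fintype A] [DecidableEq A] (f : ∀ t : ℕ, Hist S A t → A) :
    Policy S A where
  p := fun t h a => if a = f t h then 1 else 0
  nonneg := by intro t h a; (try dsimp only); split <;> norm_num
  sum_one := by intro t h; simp

/-- The length-`i` prefix of a history. -/
def histTake {S A : Type} {t : ℕ} (h : Hist S A t) (i : ℕ) (hi : i ≤ t) : Hist S A i :=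
  (fun j => h.1 ⟨(j : ℕ), by have := j.isLt; omega⟩,
   fun j => h.2 ⟨(j : ℕ), by have := j.isLt; omega⟩)

/-- The probability that policy `π` generates the history `h` when interacting with
the CMP `M` (initial state from `μ`, actions from `π`, transitions from `P`). -/
noncomputable def histProb {S A : Type} [Fintype S] [Fintype A]
    (M : CMP S A) (π : Policy S A) {t : ℕ} (h : Hist S A t) : ℝ :=
  M.μ (h.1 0) * ∏ i : Fin t,
    (π.p i (histTake h i (Nat.le_of_lt i.isLt)) (h.2 i) *
      M.P (h.1 i.castSucc) (h.2 i) (h.1 i.succ))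

/-- The `t`-step state distribution `d_t^π(s) = Pr(s_t = s)`. -/
noncomputable def stateDist {S A : Type} [Fintype S] [Fintype A] [DecidableEq S]
    (M : CMP S A) (π : Policy S A) (t : ℕ) (s : S) : ℝ :=
  ∑ h : Hist S A t, if lastState h = s then histProb M π h else 0

/-- Shannon entropy of a distribution on a finite set (`0 log 0 = 0` since `Real.log 0 = 0`). -/
noncomputable def entropy {S : Type} [Fintype S] (d : S → ℝ) : ℝ :=
  -∑ s, d s * Real.log (d s)

/-- The state visitation frequency of a trajectory with `n+1` states. -/
noncomputable def visitFreq {S A : Type} [Fintype S] [DecidableEq S] {n : ℕ}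
    (h : Hist S A n) (s : S) : ℝ :=
  (∑ i : Fin (n + 1), if h.1 i = s then (1 : ℝ) else 0) / ((n : ℝ) + 1)

/-- The marginal state distribution `d_T^π(s) = (1/T) ∑_{t<T} d_t^π(s)`. -/
noncomputable def marginalDist {S A : Type} [Fintype S] [Fintype A] [DecidableEq S]
    (M : CMP S A) (π : Policy S A) (T : ℕ) (s : S) : ℝ :=
  (1 / (T : ℝ)) * ∑ t ∈ Finset.range T, stateDist M π t s

/-- The `γ`-discounted state distribution `d_γ^π(s) = (1-γ) ∑_t γ^t d_t^π(s)`. -/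
noncomputable def discountedDist {S A : Type} [Fintype S] [Fintype A] [DecidableEq S]
    (M : CMP S A) (π : Policy S A) (γ : ℝ) (s : S) : ℝ :=
  (1 - γ) * ∑' t : ℕ, γ ^ t * stateDist M π t s

/-- Concatenation of a length-`t` history with a `k`-step continuation. -/
def histAppend {S A : Type} {t k : ℕ} (h : Hist S A t) (c : Contin S A k) : Hist S A (t + k) :=
  (fun j => if hj : (j : ℕ) ≤ t then h.1 ⟨(j : ℕ), by omega⟩
            else c.2 ⟨(j : ℕ) - t - 1, by have := j.isLt; omega⟩,
   fun j => if hj : (j : ℕ) < t then h.2 ⟨(j : ℕ), hj⟩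
            else c.1 ⟨(j : ℕ) - t, by have := j.isLt; omega⟩)

/-- The probability that, after the prefix history `h`, running `π` (conditioned on the
full history) produces the `k`-step continuation `c`. -/
noncomputable def contProb {S A : Type} [Fintype S] [Fintype A]
    (M : CMP S A) (π : Policy S A) {t k : ℕ} (h : Hist S A t) (c : Contin S A k) : ℝ :=
  ∏ i : Fin k,
    (π.p (t + (i : ℕ))
        (histTake (histAppend h c) (t + (i : ℕ)) (by have := i.isLt; omega))
        ((histAppend h c).2 ⟨t + (i : ℕ), by have := i.isLt; omega⟩) *
      M.P ((histAppend h c).1 ⟨t + (i : ℕ), by have := i.isLt; omega⟩)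
        ((histAppend h c).2 ⟨t + (i : ℕ), by have := i.isLt; omega⟩)
        ((histAppend h c).1 ⟨t + (i : ℕ) + 1, by have := i.isLt; omega⟩))

/-- The expected entropy of the state visitation frequency of the completed trajectory,
when running `π` for `k` further steps after the prefix history `h`. -/
noncomputable def expEntFrom {S A : Type} [Fintype S] [Fintype A] [DecidableEq S]
    (M : CMP S A) (π : Policy S A) {t : ℕ} (k : ℕ) (h : Hist S A t) : ℝ :=
  ∑ c : Contin S A k, contProb M π h c * entropy (visitFreq (histAppend h c))

/-- A history has positive probability (under some policy) iff its initial state and all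
its transitions have positive probability. -/
def Reachable {S A : Type} [Fintype S] [Fintype A] (M : CMP S A) {t : ℕ}
    (h : Hist S A t) : Prop :=
  0 < M.μ (h.1 0) ∧ ∀ i : Fin t, 0 < M.P (h.1 i.castSucc) (h.2 i) (h.1 i.succ)

section Aux

variable {S A : Type} [Fintype S] [Fintype A] [DecidableEq S]

lemma snoc_lt {n : ℕ} {α : Type*} (f : Fin n → α) (x : α) (j : Fin (n + 1))
    (hj : (j : ℕ) < n) : (Fin.snoc f x : Fin (n + 1) → α) j = f ⟨j, hj⟩ := by
  have hj' : j = Fin.castSucc ⟨j, hj⟩ := by ext; rfl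
  conv_lhs => rw [hj']
  rw [Fin.snoc_castSucc]

/-- Extend a history by one action and one state. -/
def histSnoc {t : ℕ} (h : Hist S A t) (a : A) (s' : S) : Hist S A (t + 1) :=
  (Fin.snoc h.1 s', Fin.snoc h.2 a)

def histEquiv (S A : Type) (t : ℕ) : Hist S A t × (A × S) ≃ Hist S A (t + 1) where
  toFun x := histSnoc x.1 x.2.1 x.2.2
  invFun H := ((Fin.init H.1, Fin.init H.2), (H.2 (Fin.last t), H.1 (Fin.last (t + 1))))
  left_inv := by
    rintro ⟨⟨f, g⟩, a, s⟩
    simp [histSnoc]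
  right_inv := by
    rintro ⟨f, g⟩
    simp [histSnoc, Fin.snoc_init_self]

lemma histTake_snoc {t : ℕ} (h : Hist S A t) (a : A) (s' : S) (i : ℕ) (hi : i ≤ t) :
    histTake (histSnoc h a s') i (by omega) = histTake h i hi := by
  unfold histTake histSnoc
  refine Prod.ext ?_ ?_
  · funext j
    exact snoc_lt h.1 s' _ (show ((j : ℕ) : ℕ) < t + 1 by have := j.isLt; omega)
  · funext j
    exact snoc_lt h.2 a _ (show ((j : ℕ) : ℕ) < t by have := j.isLt; omega)

lemma histTake_self {t : ℕ} (h : Hist S A t) : histTake h t (le_refl t) = h := by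
  unfold histTake
  refine Prod.ext ?_ ?_ <;> funext j <;> exact congrArg _ (by ext; rfl)

lemma lastState_histSnoc {t : ℕ} (h : Hist S A t) (a : A) (s' : S) :
    lastState (histSnoc h a s') = s' := by
  simp [lastState, histSnoc]

lemma histProb_snoc (M : CMP S A) (π : Policy S A) {t : ℕ} (h : Hist S A t) (a : A) (s' : S) :
    histProb M π (histSnoc h a s')
      = histProb M π h * (π.p t h a * M.P (lastState h) a s') := by
  have fst_lt : ∀ (j : Fin (t + 2)) (hj : (j : ℕ) < t + 1),
      (histSnoc h a s').1 j = h.1 ⟨j, hj⟩ := fun j hj => snoc_lt h.1 s' j hj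
  have snd_lt : ∀ (j : Fin (t + 1)) (hj : (j : ℕ) < t),
      (histSnoc h a s').2 j = h.2 ⟨j, hj⟩ := fun j hj => snoc_lt h.2 a j hj
  have fst_last : (histSnoc h a s').1 (Fin.last (t + 1)) = s' := by
    show (Fin.snoc h.1 s' : Fin (t + 2) → S) (Fin.last (t + 1)) = s'
    exact Fin.snoc_last _ _
  have snd_last : (histSnoc h a s').2 (Fin.last t) = a := by
    show (Fin.snoc h.2 a : Fin (t + 1) → A) (Fin.last t) = a
    exact Fin.snoc_last _ _
  have hlast : (Fin.last t).succ = Fin.last (t + 1) := rfl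
  have ht2 : histTake (histSnoc h a s') ((Fin.last t : Fin (t + 1)) : ℕ)
      (Nat.le_of_lt (Fin.last t).isLt) = h :=
    (histTake_snoc h a s' t (le_refl t)).trans (histTake_self h)
  unfold histProb
  rw [Fin.prod_univ_castSucc, ← mul_assoc]
  congr 1
  · refine congrArg₂ (· * ·) ?_ ?_
    · exact congrArg M.μ ((fst_lt 0 (by simp)).trans (congrArg h.1 (Fin.ext (by simp) : _ = (0 : Fin (t + 1)))))
    · refine Finset.prod_congr rfl fun j _ => ?_
      have ht : histTake (histSnoc h a s') ((Fin.castSucc j : Fin (t + 1)) : ℕ)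
          (Nat.le_of_lt (Fin.castSucc j).isLt)
          = histTake h ((j : ℕ)) (Nat.le_of_lt j.isLt) :=
        histTake_snoc h a s' _ (Nat.le_of_lt j.isLt)
      rw [snd_lt (Fin.castSucc j) j.isLt,
        fst_lt (Fin.castSucc j).castSucc (Nat.lt_succ_of_lt j.isLt),
        fst_lt (Fin.castSucc j).succ (Nat.succ_lt_succ j.isLt), ht]
      rfl
  · rw [hlast, snd_last, fst_last,
      fst_lt (Fin.last t).castSucc (Nat.lt_succ_self t), ht2]
    rfl

lemma histProb_nonneg (M : CMP S A) (π : Policy S A) {t : ℕ} (h : Hist S A t) :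
    0 ≤ histProb M π h :=
  mul_nonneg (M.μ_nonneg _) (Finset.prod_nonneg fun i _ =>
    mul_nonneg (π.nonneg _ _ _) (M.P_nonneg _ _ _))

lemma stateDist_nonneg (M : CMP S A) (π : Policy S A) (t : ℕ) (s : S) :
    0 ≤ stateDist M π t s :=
  Finset.sum_nonneg fun h _ => by
    split
    · exact histProb_nonneg M π h
    · exact le_refl 0

/-- Joint state-action distribution at time `t`. -/
noncomputable def joint (M : CMP S A) (π : Policy S A) (t : ℕ) (s : S) (a : A) : ℝ :=
  ∑ h : Hist S A t, if lastState h = s then histProb M π h * π.p t h a else 0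

lemma joint_nonneg (M : CMP S A) (π : Policy S A) (t : ℕ) (s : S) (a : A) :
    0 ≤ joint M π t s a :=
  Finset.sum_nonneg fun h _ => by
    split
    · exact mul_nonneg (histProb_nonneg M π h) (π.nonneg _ _ _)
    · exact le_refl 0

lemma sum_joint (M : CMP S A) (π : Policy S A) (t : ℕ) (s : S) :
    ∑ a, joint M π t s a = stateDist M π t s := by
  unfold joint stateDist
  rw [Finset.sum_comm]
  refine Finset.sum_congr rfl fun h _ => ?_
  by_cases hs : lastState h = s
  · simp only [hs, if_true, ← Finset.mul_sum, π.sum_one, mul_one]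
  · simp [hs]

lemma stateDist_succ (M : CMP S A) (π : Policy S A) (t : ℕ) (s' : S) :
    stateDist M π (t + 1) s'
      = ∑ h : Hist S A t, ∑ a, histProb M π h * (π.p t h a * M.P (lastState h) a s') := by
  unfold stateDist
  rw [← Fintype.sum_equiv (histEquiv S A t)
    (fun x : Hist S A t × (A × S) =>
      if lastState ((histEquiv S A t) x) = s' then histProb M π ((histEquiv S A t) x) else 0)
    (fun H : Hist S A (t + 1) => if lastState H = s' then histProb M π H else 0)
    (fun x => rfl)]
  rw [Fintype.sum_prod_type]
  refine Finset.sum_congr rfl fun h _ => ?_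
  rw [Fintype.sum_prod_type]
  refine Finset.sum_congr rfl fun a _ => ?_
  have : ∀ s : S, lastState ((histEquiv S A t) (h, a, s)) = s := fun s =>
    lastState_histSnoc h a s
  simp only [this]
  rw [Finset.sum_ite_eq' Finset.univ s' (fun s => histProb M π ((histEquiv S A t) (h, a, s)))]
  simp only [Finset.mem_univ, if_true]
  exact histProb_snoc M π h a s'

lemma stateDist_succ' (M : CMP S A) (π : Policy S A) (t : ℕ) (s' : S) :
    stateDist M π (t + 1) s' = ∑ s, ∑ a, joint M π t s a * M.P s a s' := by
  rw [stateDist_succ]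
  have key : ∀ s a, joint M π t s a * M.P s a s'
      = ∑ h : Hist S A t, if lastState h = s
          then histProb M π h * (π.p t h a * M.P (lastState h) a s') else 0 := by
    intro s a
    unfold joint
    rw [Finset.sum_mul]
    refine Finset.sum_congr rfl fun h _ => ?_
    by_cases hs : lastState h = s
    · simp only [hs, if_true]; ring
    · simp [hs]
  simp only [key]
  have c1 : ∀ F : S → A → Hist S A t → ℝ,
      ∑ s, ∑ a, ∑ h, F s a h = ∑ h : Hist S A t, ∑ a, ∑ s, F s a h := fun F =>
    calc ∑ s, ∑ a, ∑ h, F s a h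
        = ∑ a, ∑ s, ∑ h, F s a h := Finset.sum_comm
      _ = ∑ a, ∑ h : Hist S A t, ∑ s, F s a h :=
          Finset.sum_congr rfl fun a _ => Finset.sum_comm
      _ = ∑ h : Hist S A t, ∑ a, ∑ s, F s a h := Finset.sum_comm
  rw [c1]
  refine Finset.sum_congr rfl fun h _ => ?_
  refine Finset.sum_congr rfl fun a _ => ?_
  rw [Finset.sum_ite_eq Finset.univ (lastState h)]
  simp

lemma stateDist_zero_indep (M : CMP S A) (π π' : Policy S A) (s : S) :
    stateDist M π 0 s = stateDist M π' 0 s := by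
  simp [stateDist, histProb]

variable [Nonempty A]

/-- The Markovianization of a general policy. -/
noncomputable def mkM (M : CMP S A) (π : Policy S A) : MPolicy S A where
  p := fun t s a => if stateDist M π t s = 0 then (Fintype.card A : ℝ)⁻¹
    else joint M π t s a / stateDist M π t s
  nonneg := by
    intro t s a
    split
    · positivity
    · exact div_nonneg (joint_nonneg M π t s a) (stateDist_nonneg M π t s)
  sum_one := by
    intro t s
    by_cases hd : stateDist M π t s = 0
    · simp only [hd, if_true, Finset.sum_const, Finset.card_univ, nsmul_eq_mul]
      rw [mul_inv_cancel₀]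
      exact_mod_cast Fintype.card_ne_zero
    · simp only [hd, if_false]
      rw [← Finset.sum_div, sum_joint, div_self hd]

lemma joint_eq_zero (M : CMP S A) (π : Policy S A) (t : ℕ) (s : S) (a : A)
    (hd : stateDist M π t s = 0) : joint M π t s a = 0 := by
  have h0 : ∑ a, joint M π t s a = 0 := by rw [sum_joint, hd]
  exact (Finset.sum_eq_zero_iff_of_nonneg fun a _ => joint_nonneg M π t s a).mp h0 a
    (Finset.mem_univ a)

lemma joint_toPolicy (M : CMP S A) (m : MPolicy S A) (t : ℕ) (s : S) (a : A) :
    joint M m.toPolicy t s a = m.p t s a * stateDist M m.toPolicy t s := by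
  unfold joint stateDist
  rw [Finset.mul_sum]
  refine Finset.sum_congr rfl fun h _ => ?_
  by_cases hs : lastState h = s
  · simp only [hs, if_true, MPolicy.toPolicy, hs, mul_comm]
  · simp [hs]

lemma stateDist_mkM (M : CMP S A) (π : Policy S A) :
    ∀ t s, stateDist M (mkM M π).toPolicy t s = stateDist M π t s := by
  intro t
  induction t with
  | zero => exact fun s => stateDist_zero_indep M _ π s
  | succ t ih =>
    intro s'
    rw [stateDist_succ', stateDist_succ']
    refine Finset.sum_congr rfl fun s _ => Finset.sum_congr rfl fun a _ => ?_
    congr 1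
    rw [joint_toPolicy, ih s]
    by_cases hd : stateDist M π t s = 0
    · rw [hd, mul_zero, joint_eq_zero M π t s a hd]
    · show (mkM M π).p t s a * stateDist M π t s = joint M π t s a
      unfold mkM
      simp only [hd, if_false]
      exact div_mul_cancel₀ _ hd

end Aux

/-- for every finite horizon `T ≥ 1`, the set of marginal state
distributions induced by non-Markovian policies equals the set induced by Markovian
policies. -/
theorem marginal_state_distributions_eq
    {S A : Type} [Fintype S] [Fintype A] [Nonempty S] [Nonempty A] [DecidableEq S]
    (M : CMP S A) (T : ℕ) (hT : 1 ≤ T) :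
    {f : S → ℝ | ∃ π : Policy S A, f = fun s => marginalDist M π T s}
      = {f : S → ℝ | ∃ π' : MPolicy S A, f = fun s => marginalDist M π'.toPolicy T s} := by
  ext f
  constructor
  · rintro ⟨π, rfl⟩
    refine ⟨mkM M π, funext fun s => ?_⟩
    unfold marginalDist
    congr 1
    exact Finset.sum_congr rfl fun t _ => (stateDist_mkM M π t s).symm
  · rintro ⟨π', rfl⟩
    exact ⟨π'.toPolicy, rfl⟩
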